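/- Let X be a zero-dimensional set of reals. Then the following are equivalent: (1) X satisfies S1(BΓ, BΩ), i.e., for every sequence ⟨U_n : n ∈ ℕ⟩ of countable Borel γ-covers of X there exist U_n ∈ U_n such that {U_n : n ∈ ℕ} is an ω-cover of X; (2) for every Borel measurable function Ψ : X → ℕ^ℕ, the image Ψ[X] satisfies S1(Γ, Ω) (the same selection property with countable open γ-covers and open ω-covers); (3) for every Borel measurable function Ψ : X → ℕ^ℕ, the image Ψ[X] satisfies Sfin(Γ, Ω), i.e., for every sequence ⟨U_n : n ∈ ℕ⟩ of countable open γ-covers there exist finite F_n ⊆ U_n such that ∪_{n∈ℕ} F_n is an ω-cover; (4) for every Borel measurable function Ψ : X → ℕ^ℕ, the image Ψ[X] satisfies Ufin(Γ, Ω), i.e., for every sequence ⟨U_n : n ∈ ℕ⟩ of countable open γ-covers there exist finite F_n ⊆ U_n such that either ∪F_n is the whole image for some n, or {∪F_n : n ∈ ℕ} is an ω-cover of the image. -/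

import Mathlib

open Filter

/-- `f ≤* g`: `f n ≤ g n` for all but finitely many `n`. -/
def EvLE (f g : ℕ → ℕ) : Prop := ∀ᶠ n in atTop, f n ≤ g n

/-- A subset of the Baire space is dominating if every function is
eventually dominated by a member of it. -/
def Dominating (Y : Set (ℕ → ℕ)) : Prop := ∀ g : ℕ → ℕ, ∃ f ∈ Y, EvLE g f

/-- A subset of the Baire space is bounded (w.r.t. `≤*`) if some single
function eventually dominates all its members. -/
def BoundedStar (Y : Set (ℕ → ℕ)) : Prop := ∃ g : ℕ → ℕ, ∀ f ∈ Y, EvLE f g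

/-- `maxfin Y`: pointwise maxima of nonempty finite subsets of `Y`. -/
def maxfin (Y : Set (ℕ → ℕ)) : Set (ℕ → ℕ) :=
  {g | ∃ F : Finset (ℕ → ℕ), F.Nonempty ∧ ↑F ⊆ Y ∧ g = fun n => F.sup (fun f => f n)}

/-- `Y` is `k`-dominating: for each `f` there are `g_1, …, g_k ∈ Y` whose
pointwise maximum eventually dominates `f`. -/
def KDominating (Y : Set (ℕ → ℕ)) (k : ℕ) : Prop :=
  ∀ f : ℕ → ℕ, ∃ g : Fin k → (ℕ → ℕ), (∀ i, g i ∈ Y) ∧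
    ∀ᶠ n in atTop, f n ≤ Finset.univ.sup (fun i => g i n)

/-- An open cover of a topological space. -/
def IsOpenCover {α : Type*} [TopologicalSpace α] (𝒰 : Set (Set α)) : Prop :=
  (∀ u ∈ 𝒰, IsOpen u) ∧ ⋃₀ 𝒰 = Set.univ

/-- An ω-cover: a cover such that every finite subset of the space is
contained in some member. -/
def IsOmegaCover {α : Type*} (𝒱 : Set (Set α)) : Prop :=
  ⋃₀ 𝒱 = Set.univ ∧ ∀ F : Set α, F.Finite → ∃ V ∈ 𝒱, F ⊆ V

/-- A γ-cover: an infinite cover such that every point belongs to all but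
finitely many members. -/
def IsGammaCover {α : Type*} (𝒱 : Set (Set α)) : Prop :=
  ⋃₀ 𝒱 = Set.univ ∧ 𝒱.Infinite ∧ ∀ x : α, {V ∈ 𝒱 | x ∉ V}.Finite

/-- A set of reals is zero-dimensional: its subspace topology has a base of
clopen sets. -/
def ZeroDimensionalSet (X : Set ℝ) : Prop :=
  ∃ B : Set (Set ↥X), TopologicalSpace.IsTopologicalBasis B ∧ ∀ b ∈ B, IsClopen b

/-- The Menger property `Ufin(O,O)`. -/
def MengerProp (α : Type*) [TopologicalSpace α] : Prop :=
  ∀ 𝒰 : ℕ → Set (Set α), (∀ n, (𝒰 n).Countable ∧ IsOpenCover (𝒰 n)) →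
    ∃ ℱ : ℕ → Set (Set α), (∀ n, (ℱ n).Finite ∧ ℱ n ⊆ 𝒰 n) ∧
      (⋃ n, ⋃₀ ℱ n) = Set.univ

/-- The Hurewicz property `Ufin(O,Γ)`. -/
def HurewiczProp (α : Type*) [TopologicalSpace α] : Prop :=
  ∀ 𝒰 : ℕ → Set (Set α), (∀ n, (𝒰 n).Countable ∧ IsOpenCover (𝒰 n)) →
    ∃ ℱ : ℕ → Set (Set α), (∀ n, (ℱ n).Finite ∧ ℱ n ⊆ 𝒰 n) ∧
      ((∃ n, ⋃₀ ℱ n = Set.univ) ∨ IsGammaCover {s | ∃ n, s = ⋃₀ ℱ n})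

/-- The property `Ufin(O,Ω)`. -/
def UfinOOmega (α : Type*) [TopologicalSpace α] : Prop :=
  ∀ 𝒰 : ℕ → Set (Set α), (∀ n, (𝒰 n).Countable ∧ IsOpenCover (𝒰 n)) →
    ∃ ℱ : ℕ → Set (Set α), (∀ n, (ℱ n).Finite ∧ ℱ n ⊆ 𝒰 n) ∧
      ((∃ n, ⋃₀ ℱ n = Set.univ) ∨ IsOmegaCover {s | ∃ n, s = ⋃₀ ℱ n})

/-- `S1(Γ,Ω)` for countable open covers: from each member of a sequence of
countable open γ-covers we can choose one element so that the chosen sets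
form an ω-cover. -/
def S1GammaOmega (α : Type*) [TopologicalSpace α] : Prop :=
  ∀ 𝒰 : ℕ → Set (Set α),
    (∀ n, (𝒰 n).Countable ∧ (∀ u ∈ 𝒰 n, IsOpen u) ∧ IsGammaCover (𝒰 n)) →
    ∃ sel : ℕ → Set α, (∀ n, sel n ∈ 𝒰 n) ∧ IsOmegaCover (Set.range sel)

/-- `Sfin(Γ,Ω)` for countable open covers. -/
def SfinGammaOmega (α : Type*) [TopologicalSpace α] : Prop :=
  ∀ 𝒰 : ℕ → Set (Set α),
    (∀ n, (𝒰 n).Countable ∧ (∀ u ∈ 𝒰 n, IsOpen u) ∧ IsGammaCover (𝒰 n)) →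
    ∃ ℱ : ℕ → Set (Set α), (∀ n, (ℱ n).Finite ∧ ℱ n ⊆ 𝒰 n) ∧
      IsOmegaCover (⋃ n, ℱ n)

/-- `Ufin(Γ,Ω)` for countable open covers. -/
def UfinGammaOmega (α : Type*) [TopologicalSpace α] : Prop :=
  ∀ 𝒰 : ℕ → Set (Set α),
    (∀ n, (𝒰 n).Countable ∧ (∀ u ∈ 𝒰 n, IsOpen u) ∧ IsGammaCover (𝒰 n)) →
    ∃ ℱ : ℕ → Set (Set α), (∀ n, (ℱ n).Finite ∧ ℱ n ⊆ 𝒰 n) ∧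
      ((∃ n, ⋃₀ ℱ n = Set.univ) ∨ IsOmegaCover {s | ∃ n, s = ⋃₀ ℱ n})

/-- A subset of `X` is Borel-in-`X` if it is a Borel subset of `ℝ`
intersected with `X`. -/
def IsBorelInX {X : Set ℝ} (u : Set ↥X) : Prop :=
  ∃ B : Set ℝ, MeasurableSet B ∧ u = ((↑) : ↥X → ℝ) ⁻¹' B

/-- `S1(BΓ,BΩ)`: for every sequence of countable Borel γ-covers of `X`
there are selections forming an ω-cover. -/
def S1BGammaBOmega (X : Set ℝ) : Prop :=
  ∀ 𝒰 : ℕ → Set (Set ↥X),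
    (∀ n, (𝒰 n).Countable ∧ (∀ u ∈ 𝒰 n, IsBorelInX u) ∧ IsGammaCover (𝒰 n)) →
    ∃ sel : ℕ → Set ↥X, (∀ n, sel n ∈ 𝒰 n) ∧ IsOmegaCover (Set.range sel)

/-- A function on `X` is Borel measurable if preimages of open sets are
Borel. -/
def IsBorelMeasurable {X : Set ℝ} (Ψ : ↥X → (ℕ → ℕ)) : Prop :=
  ∀ U : Set (ℕ → ℕ), IsOpen U → MeasurableSet (Ψ ⁻¹' U)

-- helpers
lemma omega_of_univ_mem {α : Type*} {S : Set (Set α)} (h : Set.univ ∈ S) : IsOmegaCover S := by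
  constructor
  · exact Set.eq_univ_of_univ_subset (Set.subset_sUnion_of_mem h)
  · exact fun F _ => ⟨Set.univ, h, Set.subset_univ F⟩

lemma exists_enum {α : Type*} {s : Set α} (hc : s.Countable) (hi : s.Infinite) :
    ∃ u : ℕ → α, Function.Injective u ∧ Set.range u = s := by
  obtain ⟨d⟩ := Set.countable_infinite_iff_nonempty_denumerable.mp ⟨hc, hi⟩
  let e := (Denumerable.eqv ↥s).symm
  refine ⟨fun n => (e n : α), fun a b hab => e.injective (Subtype.ext hab), ?_⟩
  ext y
  constructor
  · rintro ⟨n, rfl⟩; exact (e n).2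
  · intro hy; exact ⟨e.symm ⟨y, hy⟩, by simp⟩

lemma infinite_of_exists_ssuperset {α : Type*} {S : Set (Set α)} (hne : S.Nonempty)
    (h : ∀ V ∈ S, ∃ W ∈ S, V ⊂ W) : S.Infinite := by
  intro hfin
  obtain ⟨V, hV, hmax⟩ := Set.Finite.exists_maximalFor id S hfin hne
  obtain ⟨W, hW, hVW⟩ := h V hV
  exact (not_subset_of_ssubset hVW) (hmax hW hVW.le)

lemma sfin_of_s1 {α : Type*} [TopologicalSpace α] (h : S1GammaOmega α) : SfinGammaOmega α := by
  intro 𝒰 h𝒰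
  obtain ⟨sel, hsel, homega⟩ := h 𝒰 h𝒰
  refine ⟨fun n => {sel n}, fun n => ⟨Set.finite_singleton _, by simpa using hsel n⟩, ?_⟩
  rwa [show (⋃ n, {sel n}) = Set.range sel by ext s; simp [Set.mem_range, eq_comm]]

lemma ufin_of_sfin {α : Type*} [TopologicalSpace α] (h : SfinGammaOmega α) : UfinGammaOmega α := by
  intro 𝒰 h𝒰
  obtain ⟨ℱ, hℱ, homega⟩ := h 𝒰 h𝒰
  refine ⟨ℱ, hℱ, Or.inr ⟨?_, ?_⟩⟩
  · apply Set.eq_univ_of_univ_subset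
    intro x _
    have hx : x ∈ ⋃₀ ⋃ n, ℱ n := homega.1 ▸ Set.mem_univ x
    obtain ⟨V, hV, hxV⟩ := hx
    obtain ⟨_, ⟨n, rfl⟩, hVn⟩ := hV
    exact ⟨⋃₀ ℱ n, ⟨n, rfl⟩, V, hVn, hxV⟩
  · intro F hF
    obtain ⟨V, hV, hFV⟩ := homega.2 F hF
    obtain ⟨_, ⟨n, rfl⟩, hVn⟩ := hV
    exact ⟨⋃₀ ℱ n, ⟨n, rfl⟩, hFV.trans (Set.subset_sUnion_of_mem hVn)⟩

lemma isBorelInX_of_measurableSet {X : Set ℝ} {u : Set ↥X} (h : MeasurableSet u) :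
    IsBorelInX u := by
  obtain ⟨B, hB, hBu⟩ := h
  exact ⟨B, hB, hBu.symm⟩

lemma measurableSet_of_isBorelInX {X : Set ℝ} {u : Set ↥X} (h : IsBorelInX u) :
    MeasurableSet u := by
  obtain ⟨B, hB, rfl⟩ := h
  exact measurable_subtype_coe hB

/-- trivial selection when some cover contains `univ`. -/
lemma trivial_sel {α : Type*} {𝒰 : ℕ → Set (Set α)} (hne : ∀ n, (𝒰 n).Nonempty)
    (h : ∃ n, Set.univ ∈ 𝒰 n) :
    ∃ sel : ℕ → Set α, (∀ n, sel n ∈ 𝒰 n) ∧ IsOmegaCover (Set.range sel) := by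
  obtain ⟨n0, hn0⟩ := h
  choose f hf using hne
  refine ⟨fun m => if m = n0 then Set.univ else f m, fun m => ?_, omega_of_univ_mem ⟨n0, by simp⟩⟩
  by_cases hm : m = n0 <;> simp [hm, hf, hn0]

lemma imp12 {X : Set ℝ} (h1 : S1BGammaBOmega X) (Ψ : ↥X → (ℕ → ℕ))
    (hΨ : IsBorelMeasurable Ψ) : S1GammaOmega ↥(Set.range Ψ) := by
  intro 𝒰 h𝒰
  have hne : ∀ n, (𝒰 n).Nonempty := fun n => (h𝒰 n).2.2.2.1.nonempty
  by_cases hu : ∃ n, Set.univ ∈ 𝒰 n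
  · exact trivial_sel hne hu
  push_neg at hu
  set Ψ' : ↥X → ↥(Set.range Ψ) := fun x => ⟨Ψ x, Set.mem_range_self x⟩ with hΨ'def
  have hsurj : Function.Surjective Ψ' := by
    rintro ⟨y, x, rfl⟩; exact ⟨x, rfl⟩
  have hpre_univ : ∀ U : Set ↥(Set.range Ψ), Ψ' ⁻¹' U = Set.univ → U = Set.univ := by
    intro U h
    apply Set.eq_univ_of_forall
    intro y
    obtain ⟨x, rfl⟩ := hsurj y
    have : x ∈ Ψ' ⁻¹' U := h ▸ Set.mem_univ x
    exact this
  set 𝒱 : ℕ → Set (Set ↥X) := fun n => (fun U => Ψ' ⁻¹' U) '' 𝒰 n with h𝒱def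
  have h𝒱 : ∀ n, (𝒱 n).Countable ∧ (∀ v ∈ 𝒱 n, IsBorelInX v) ∧ IsGammaCover (𝒱 n) := by
    intro n
    refine ⟨(h𝒰 n).1.image _, ?_, ?_, ?_, ?_⟩
    · rintro v ⟨U, hU, rfl⟩
      have hUo : IsOpen U := (h𝒰 n).2.1 U hU
      obtain ⟨W, hW, rfl⟩ := isOpen_induced_iff.mp hUo
      show IsBorelInX (Ψ' ⁻¹' (Subtype.val ⁻¹' W))
      have heq : Ψ' ⁻¹' (Subtype.val ⁻¹' W) = Ψ ⁻¹' W := rfl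
      rw [heq]
      exact isBorelInX_of_measurableSet (hΨ W hW)
    · -- union
      apply Set.eq_univ_of_forall
      intro x
      have : Ψ' x ∈ ⋃₀ 𝒰 n := (h𝒰 n).2.2.1 ▸ Set.mem_univ _
      obtain ⟨U, hU, hxU⟩ := this
      exact ⟨Ψ' ⁻¹' U, ⟨U, hU, rfl⟩, hxU⟩
    · -- infinite
      intro hfin
      have hfib : ∃ V ∈ 𝒱 n, {U ∈ 𝒰 n | Ψ' ⁻¹' U = V}.Infinite := by
        by_contra hall
        push_neg at hall
        have : 𝒰 n ⊆ ⋃ V ∈ 𝒱 n, {U ∈ 𝒰 n | Ψ' ⁻¹' U = V} := by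
          intro U hU
          exact Set.mem_biUnion ⟨U, hU, rfl⟩ ⟨hU, rfl⟩
        exact (h𝒰 n).2.2.2.1 ((hfin.biUnion hall).subset this)
      obtain ⟨V, hV, hC⟩ := hfib
      have hVuniv : V = Set.univ := by
        apply Set.eq_univ_of_forall
        intro x
        have hbad := (h𝒰 n).2.2.2.2 (Ψ' x)
        obtain ⟨U, hUC⟩ := (hC.diff hbad).nonempty
        have hU𝒰 : U ∈ 𝒰 n := hUC.1.1
        have : Ψ' x ∈ U := by
          by_contra hx
          exact hUC.2 ⟨hU𝒰, hx⟩
        exact hUC.1.2 ▸ this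
      obtain ⟨U, hUC⟩ := hC.nonempty
      exact hu n (hpre_univ U (hUC.2.trans hVuniv) ▸ hUC.1)
    · -- cofinite
      intro x
      have hsub : {V ∈ 𝒱 n | x ∉ V} ⊆ (fun U => Ψ' ⁻¹' U) '' {U ∈ 𝒰 n | Ψ' x ∉ U} := by
        rintro V ⟨⟨U, hU, rfl⟩, hxV⟩
        exact ⟨U, ⟨hU, hxV⟩, rfl⟩
      exact (((h𝒰 n).2.2.2.2 (Ψ' x)).image _).subset hsub
  obtain ⟨sel', hsel', homega'⟩ := h1 𝒱 h𝒱
  have : ∀ n, ∃ U ∈ 𝒰 n, Ψ' ⁻¹' U = sel' n := fun n => hsel' n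
  choose sel hselmem hseleq using this
  refine ⟨sel, hselmem, ?_, ?_⟩
  · apply Set.eq_univ_of_forall
    intro y
    obtain ⟨x, rfl⟩ := hsurj y
    have : x ∈ ⋃₀ Set.range sel' := homega'.1 ▸ Set.mem_univ x
    obtain ⟨v, ⟨n, rfl⟩, hxv⟩ := this
    refine ⟨sel n, ⟨n, rfl⟩, ?_⟩
    rw [← hseleq n] at hxv
    exact hxv
  · intro F hF
    set F' : Set ↥X := Function.surjInv hsurj '' F with hF'def
    obtain ⟨v, ⟨n, rfl⟩, hFv⟩ := homega'.2 F' (hF.image _)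
    refine ⟨sel n, ⟨n, rfl⟩, ?_⟩
    intro y hy
    have hmem : Function.surjInv hsurj y ∈ sel' n := hFv ⟨y, hy, rfl⟩
    rw [← hseleq n] at hmem
    have hmem' : Ψ' (Function.surjInv hsurj y) ∈ sel n := hmem
    have heq2 : Ψ' (Function.surjInv hsurj y) = y := Function.surjInv_eq hsurj y
    rwa [heq2] at hmem'

lemma imp41 {X : Set ℝ}
    (h4 : ∀ Ψ : ↥X → (ℕ → ℕ), IsBorelMeasurable Ψ → UfinGammaOmega ↥(Set.range Ψ)) :
    S1BGammaBOmega X := by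
  classical
  intro 𝒰 h𝒰
  have hne : ∀ n, (𝒰 n).Nonempty := fun n => (h𝒰 n).2.2.2.1.nonempty
  by_cases hu0 : ∃ n, Set.univ ∈ 𝒰 n
  · exact trivial_sel hne hu0
  push_neg at hu0
  -- X is nonempty
  have hXne : Nonempty ↥X := by
    by_contra h
    have hemp : IsEmpty ↥X := not_nonempty_iff.mp h
    have : 𝒰 0 ⊆ {∅} := by
      intro V _
      simp [Set.eq_empty_of_isEmpty V]
    exact (h𝒰 0).2.2.2.1 ((Set.finite_singleton ∅).subset this)
  -- injective enumerations of the covers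
  have henum : ∀ n, ∃ u : ℕ → Set ↥X, Function.Injective u ∧ Set.range u = 𝒰 n :=
    fun n => exists_enum (h𝒰 n).1 (h𝒰 n).2.2.2.1
  choose u huinj hurange using henum
  have humem : ∀ n k, u n k ∈ 𝒰 n := fun n k => (hurange n) ▸ Set.mem_range_self k
  have huBorel : ∀ n k, MeasurableSet (u n k) :=
    fun n k => measurableSet_of_isBorelInX ((h𝒰 n).2.1 (u n k) (humem n k))
  -- cofinal membership
  have hexists : ∀ n (x : ↥X), ∃ m, ∀ k, m ≤ k → x ∈ u n k := by
    intro n x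
    have h1 : {V ∈ 𝒰 n | x ∉ V}.Finite := (h𝒰 n).2.2.2.2 x
    have hfin : {k | x ∉ u n k}.Finite := by
      have hsub : {k | x ∉ u n k} ⊆ u n ⁻¹' {V ∈ 𝒰 n | x ∉ V} :=
        fun k hk => ⟨humem n k, hk⟩
      exact (h1.preimage (huinj n).injOn).subset hsub
    obtain ⟨m, hm⟩ := hfin.bddAbove
    refine ⟨m + 1, fun k hk => ?_⟩
    by_contra hxk
    have := hm hxk
    omega
  let mfun : ℕ → ↥X → ℕ := fun n x => Nat.find (hexists n x)
  have hm_spec : ∀ n (x : ↥X) k, mfun n x ≤ k → x ∈ u n k :=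
    fun n x k hk => Nat.find_spec (hexists n x) k hk
  have hm_le : ∀ n (x : ↥X) m, (∀ k, m ≤ k → x ∈ u n k) → mfun n x ≤ m :=
    fun n x m hm => Nat.find_le hm
  -- measurability of mfun
  have hmle_meas : ∀ n m, MeasurableSet {x : ↥X | mfun n x ≤ m} := by
    intro n m
    have : {x : ↥X | mfun n x ≤ m} = ⋂ k, ⋂ (_ : m ≤ k), u n k := by
      ext x
      simp only [Set.mem_setOf_eq, Set.mem_iInter]
      constructor
      · intro h k hk
        exact hm_spec n x k (h.trans hk)
      · intro h
        exact hm_le n x m h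
    rw [this]
    exact MeasurableSet.iInter fun k => MeasurableSet.iInter fun _ => huBorel n k
  have hm_meas : ∀ n, Measurable (mfun n) := by
    intro n
    apply measurable_to_countable'
    intro m
    have : mfun n ⁻¹' {m} =
        {x : ↥X | mfun n x ≤ m} ∩ (⋂ j, ⋂ (_ : j < m), {x : ↥X | mfun n x ≤ j}ᶜ) := by
      ext x
      simp only [Set.mem_preimage, Set.mem_singleton_iff, Set.mem_inter_iff,
        Set.mem_setOf_eq, Set.mem_iInter, Set.mem_compl_iff]
      constructor
      · intro h
        exact ⟨le_of_eq h, fun j hj hle => by omega⟩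
      · rintro ⟨h1, h2⟩
        by_contra hne'
        have h3 := h2 (mfun n x)
        omega
    rw [this]
    exact (hmle_meas n m).inter
      (MeasurableSet.iInter fun j => MeasurableSet.iInter fun _ => (hmle_meas n j).compl)
  -- running maximum
  let Mf : ℕ → ↥X → ℕ := fun n => Nat.rec (mfun 0) (fun n ih x => max (ih x) (mfun (n + 1) x)) n
  have hMf_meas : ∀ n, Measurable (Mf n) := by
    intro n
    induction n with
    | zero => exact hm_meas 0
    | succ n ih => exact Measurable.max ih (hm_meas (n + 1))
  have hMf_ge : ∀ n (x : ↥X), mfun n x ≤ Mf n x := by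
    intro n x
    cases n with
    | zero => exact le_refl _
    | succ n => exact le_max_right _ _
  -- the Borel map Ψ
  let Ψ : ↥X → ℕ → ℕ := fun x n => n + Mf n x
  have hΨmeas : IsBorelMeasurable Ψ := by
    intro U hU
    have hm : Measurable Ψ :=
      measurable_pi_lambda _ fun n => (measurable_const.add (hMf_meas n) : _)
    exact hm hU.measurableSet
  have hm_le_Ψ : ∀ n (x : ↥X), mfun n x ≤ Ψ x n :=
    fun n x => (hMf_ge n x).trans (Nat.le_add_left _ _)
  -- unboundedness of coordinates on the image
  have hub : ∀ n m, ∃ x : ↥X, m < Ψ x n := by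
    intro n m
    have hne' : u n m ≠ Set.univ := fun h => hu0 n (h ▸ humem n m)
    obtain ⟨x, hx⟩ := Set.ne_univ_iff_exists_notMem _ |>.mp hne'
    refine ⟨x, ?_⟩
    by_contra hle
    push_neg at hle
    exact hx (hm_spec n x m ((hm_le_Ψ n x).trans hle))
  -- the image space and the coordinate covers
  set Y := Set.range Ψ with hYdef
  let V : ℕ → ℕ → Set ↥Y := fun n m => {f : ↥Y | (f : ℕ → ℕ) n ≤ m}
  have hVmono : ∀ n (m m' : ℕ), m ≤ m' → V n m ⊆ V n m' :=
    fun n m m' h f hf => le_trans hf h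
  have hVne_univ : ∀ n m, V n m ≠ Set.univ := by
    intro n m h
    obtain ⟨x, hx⟩ := hub n m
    have hmem : (⟨Ψ x, Set.mem_range_self x⟩ : ↥Y) ∈ V n m := h ▸ Set.mem_univ _
    have : Ψ x n ≤ m := hmem
    omega
  set 𝒱 : ℕ → Set (Set ↥Y) := fun n => Set.range (V n) with h𝒱def
  have h𝒱 : ∀ n, (𝒱 n).Countable ∧ (∀ v ∈ 𝒱 n, IsOpen v) ∧ IsGammaCover (𝒱 n) := by
    intro n
    refine ⟨Set.countable_range _, ?_, ?_, ?_, ?_⟩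
    · rintro v ⟨m, rfl⟩
      have heq : V n m = (fun f : ↥Y => (f : ℕ → ℕ) n) ⁻¹' Set.Iic m := rfl
      rw [heq]
      exact ((continuous_apply n).comp continuous_subtype_val).isOpen_preimage _
        (isOpen_discrete _)
    · apply Set.eq_univ_of_forall
      intro f
      refine ⟨V n ((f : ℕ → ℕ) n), ⟨_, rfl⟩, ?_⟩
      show (f : ℕ → ℕ) n ≤ (f : ℕ → ℕ) n
      exact le_refl _
    · refine infinite_of_exists_ssuperset ⟨V n 0, 0, rfl⟩ ?_
      rintro W ⟨m, rfl⟩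
      obtain ⟨x, hx⟩ := hub n m
      have hsub : V n m ⊆ V n (Ψ x n) := hVmono n m (Ψ x n) (le_of_lt hx)
      refine ⟨V n (Ψ x n), ⟨_, rfl⟩, (Set.ssubset_iff_of_subset hsub).mpr ?_⟩
      refine ⟨⟨Ψ x, Set.mem_range_self x⟩, ?_, ?_⟩
      · show Ψ x n ≤ Ψ x n
        exact le_refl _
      · intro hcon
        have : Ψ x n ≤ m := hcon
        omega
    · intro f
      have hsub : {W ∈ 𝒱 n | f ∉ W} ⊆ V n '' Set.Iio ((f : ℕ → ℕ) n) := by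
        rintro W ⟨⟨m, rfl⟩, hfW⟩
        refine ⟨m, ?_, rfl⟩
        simp only [Set.mem_Iio]
        have hno : ¬ ((f : ℕ → ℕ) n ≤ m) := hfW
        omega
      exact ((Set.finite_Iio _).image _).subset hsub
  obtain ⟨ℱ, hℱ, hcase⟩ := h4 Ψ hΨmeas 𝒱 h𝒱
  -- each selected finite family is bounded by a single member of the chain
  have key : ∀ n, ∃ m, ⋃₀ ℱ n ⊆ V n m := by
    intro n
    have keygen : ∀ (S : Set (Set ↥Y)), S.Finite → S ⊆ Set.range (V n) → ∃ m, ⋃₀ S ⊆ V n m := by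
      intro S hS
      refine Set.Finite.induction_on (motive := fun S _ => S ⊆ Set.range (V n) → ∃ m, ⋃₀ S ⊆ V n m) S hS (fun _ => ⟨0, by simp⟩) ?_
      intro W S' _ _ ih hsub
      obtain ⟨m1, hm1⟩ := ih (fun W' hW' => hsub (Set.mem_insert_of_mem _ hW'))
      obtain ⟨m2, hm2⟩ := hsub (Set.mem_insert _ _)
      refine ⟨max m1 m2, ?_⟩
      rw [Set.sUnion_insert]
      apply Set.union_subset
      · rw [← hm2]
        exact hVmono n m2 (max m1 m2) (le_max_right _ _)
      · exact hm1.trans (hVmono n m1 (max m1 m2) (le_max_left _ _))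
    exact keygen (ℱ n) (hℱ n).1 (hℱ n).2
  choose g hgsub using key
  rcases hcase with ⟨n, hn⟩ | homega
  · exact absurd (Set.eq_univ_of_univ_subset (hn ▸ hgsub n)) (hVne_univ n (g n))
  -- the selection
  have hkey2 : ∀ F : Set ↥X, F.Finite → ∃ n, F ⊆ u n (g n) := by
    intro F hF
    set Ψ' : ↥X → ↥Y := fun x => ⟨Ψ x, Set.mem_range_self x⟩ with hΨ'def
    obtain ⟨s, ⟨n, rfl⟩, hFs⟩ := homega.2 (Ψ' '' F) (hF.image _)
    refine ⟨n, fun x hx => ?_⟩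
    have h1 : Ψ' x ∈ V n (g n) := hgsub n (hFs ⟨x, hx, rfl⟩)
    have h2 : Ψ x n ≤ g n := h1
    exact hm_spec n x (g n) ((hm_le_Ψ n x).trans h2)
  refine ⟨fun n => u n (g n), fun n => humem n (g n), ?_, fun F hF => ?_⟩
  · apply Set.eq_univ_of_forall
    intro x
    obtain ⟨n, hn⟩ := hkey2 {x} (Set.finite_singleton x)
    exact ⟨u n (g n), ⟨n, rfl⟩, hn rfl⟩
  · obtain ⟨n, hn⟩ := hkey2 F hF
    exact ⟨u n (g n), ⟨n, rfl⟩, hn⟩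

/-- For a zero-dimensional set of reals `X`, the following are equivalent:
(1) `X` satisfies `S1(BΓ,BΩ)`; (2) every Borel image of `X` in the Baire
space satisfies `S1(Γ,Ω)`; (3) every Borel image satisfies `Sfin(Γ,Ω)`;
(4) every Borel image satisfies `Ufin(Γ,Ω)`. -/
theorem s1BGammaBOmega_tfae (X : Set ℝ) (hX : ZeroDimensionalSet X) :
    [S1BGammaBOmega X,
     ∀ Ψ : ↥X → (ℕ → ℕ), IsBorelMeasurable Ψ → S1GammaOmega ↥(Set.range Ψ),
     ∀ Ψ : ↥X → (ℕ → ℕ), IsBorelMeasurable Ψ → SfinGammaOmega ↥(Set.range Ψ),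
     ∀ Ψ : ↥X → (ℕ → ℕ), IsBorelMeasurable Ψ → UfinGammaOmega ↥(Set.range Ψ)].TFAE := by
  tfae_have 1 → 2 := fun h Ψ hΨ => imp12 h Ψ hΨ
  tfae_have 2 → 3 := fun h Ψ hΨ => sfin_of_s1 (h Ψ hΨ)
  tfae_have 3 → 4 := fun h Ψ hΨ => ufin_of_sfin (h Ψ hΨ)
  tfae_have 4 → 1 := fun h => imp41 h
  tfae_finish
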